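/- (Funnel invariance.) Consider the system ẋ = f(x) + g(x)u with f, g locally Lipschitz and g(x)g(x)ᵀ positive definite for all x, a funnel (γ_L, γ_U), and the funnel controller û with gain k > 0. Let T > 0 and let x : [0,T] → ℝⁿ be any admissible closed-loop solution. Then γ_{i,L}(t) < x_i(t) < γ_{i,U}(t) for every t ∈ [0,T] and every i ∈ {1,…,n}; that is, the controller renders the funnel forward invariant and the trajectory never reaches the funnel boundary. -/

import Mathlib

open Matrix Set

/-- Normalized error `ê = (2z − (U + L))/(U − L)`. -/
noncomputable def nerr (L U z : ℝ) : ℝ := (2 * z - (U + L)) / (U - L)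

/-- Transformed error `ε̂ = ln((1 + ê)/(1 − ê))`. -/
noncomputable def terr (L U z : ℝ) : ℝ := Real.log ((1 + nerr L U z) / (1 - nerr L U z))

/-- Diagonal gain entry `ξ̂ = 4/((U − L)(1 − ê²))`. -/
noncomputable def xhat (L U z : ℝ) : ℝ := 4 / ((U - L) * (1 - (nerr L U z) ^ 2))

/-- The funnel controller
`û(y,t) = −g(y)ᵀ(g(y)g(y)ᵀ)⁻¹ (k ξ̂(y,t) ε̂(y,t) − ½ γ̇_d(t) ê(y,t))`. -/
noncomputable def funnelController {n m : ℕ} (k : ℝ)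
    (g : (Fin n → ℝ) → Matrix (Fin n) (Fin m) ℝ)
    (γL γU γL' γU' : ℝ → Fin n → ℝ) (y : Fin n → ℝ) (t : ℝ) : Fin m → ℝ :=
  -((g y)ᵀ.mulVec (((g y * (g y)ᵀ)⁻¹).mulVec (fun i =>
      k * xhat (γL t i) (γU t i) (y i) * terr (γL t i) (γU t i) (y i)
        - (1 / 2) * (γU' t i - γL' t i) * nerr (γL t i) (γU t i) (y i))))

lemma nerr_mem {L U z : ℝ} (h1 : L < z) (h2 : z < U) :
    -1 < nerr L U z ∧ nerr L U z < 1 := by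
  have hD : 0 < U - L := by linarith
  constructor
  · rw [nerr, lt_div_iff₀ hD]; linarith
  · rw [nerr, div_lt_one hD]; linarith

lemma nerr_hasDerivAt {ℓ u z : ℝ → ℝ} {ℓ' u' z' t : ℝ}
    (hℓ : HasDerivAt ℓ ℓ' t) (hu : HasDerivAt u u' t) (hz : HasDerivAt z z' t)
    (hlu : ℓ t < u t) :
    HasDerivAt (fun s => nerr (ℓ s) (u s) (z s))
      ((2 * z' - (u' + ℓ') - nerr (ℓ t) (u t) (z t) * (u' - ℓ')) / (u t - ℓ t)) t := by
  have hD : u t - ℓ t ≠ 0 := sub_ne_zero.mpr hlu.ne'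
  have h1 : HasDerivAt (fun s => 2 * z s - (u s + ℓ s)) (2 * z' - (u' + ℓ')) t :=
    ((hz.const_mul 2).sub (hu.add hℓ))
  have h2 : HasDerivAt (fun s => u s - ℓ s) (u' - ℓ') t := hu.sub hℓ
  have h3 := h1.div h2 hD
  refine h3.congr_deriv (Eq.symm ?_)
  unfold nerr
  rw [div_eq_div_iff hD (pow_ne_zero 2 hD)]
  field_simp

lemma terr_hasDerivAt {ℓ u z : ℝ → ℝ} {ℓ' u' z' t : ℝ}
    (hℓ : HasDerivAt ℓ ℓ' t) (hu : HasDerivAt u u' t) (hz : HasDerivAt z z' t)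
    (h1 : ℓ t < z t) (h2 : z t < u t) :
    HasDerivAt (fun s => terr (ℓ s) (u s) (z s))
      (xhat (ℓ t) (u t) (z t) *
        (z' - (u' + ℓ') / 2 - nerr (ℓ t) (u t) (z t) * (u' - ℓ') / 2)) t := by
  have hlu : ℓ t < u t := h1.trans h2
  have hD : u t - ℓ t ≠ 0 := sub_ne_zero.mpr hlu.ne'
  obtain ⟨hm1, hm2⟩ := nerr_mem h1 h2
  set e := nerr (ℓ t) (u t) (z t) with he
  have hep : (0:ℝ) < 1 + e := by linarith
  have hem : (0:ℝ) < 1 - e := by linarith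
  have hde := nerr_hasDerivAt hℓ hu hz hlu
  have hnum : HasDerivAt (fun s => 1 + nerr (ℓ s) (u s) (z s))
      ((2 * z' - (u' + ℓ') - e * (u' - ℓ')) / (u t - ℓ t)) t := by
    simpa using (hde.const_add 1)
  have hden : HasDerivAt (fun s => 1 - nerr (ℓ s) (u s) (z s))
      (-((2 * z' - (u' + ℓ') - e * (u' - ℓ')) / (u t - ℓ t))) t := by
    simpa using (hde.const_sub 1)
  have hq := hnum.div hden (by simpa [← he] using hem.ne')
  have hqpos : (0:ℝ) < (1 + e) / (1 - e) := div_pos hep hem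
  have hlog := hq.log (by simpa [← he] using hqpos.ne')
  have : (fun s => terr (ℓ s) (u s) (z s))
      = fun s => Real.log ((1 + nerr (ℓ s) (u s) (z s)) / (1 - nerr (ℓ s) (u s) (z s))) := by
    funext s; rfl
  rw [this]
  refine hlog.congr_deriv (Eq.symm ?_)
  simp only [Pi.div_apply]
  rw [xhat, ← he]
  have h1e : (1:ℝ) - e ^ 2 ≠ 0 := by nlinarith
  field_simp
  ring

lemma ctrl_cancel {n m : ℕ} (A : Matrix (Fin n) (Fin m) ℝ)
    (hpd : (A * Aᵀ).PosDef) (w : Fin n → ℝ) :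
    A.mulVec (-(Aᵀ.mulVec (((A * Aᵀ)⁻¹).mulVec w))) = -w := by
  rw [Matrix.mulVec_neg, Matrix.mulVec_mulVec, Matrix.mulVec_mulVec,
    Matrix.mul_nonsing_inv _ hpd.det_pos.ne'.isUnit, Matrix.one_mulVec]

lemma stay_lt {w w' : ℝ → ℝ} {b B : ℝ}
    (hd : ∀ t ∈ Icc (0:ℝ) b, HasDerivAt w (w' t) t)
    (h0 : w 0 < B)
    (hneg : ∀ t ∈ Icc (0:ℝ) b, B ≤ w t → w' t < 0) :
    ∀ t ∈ Icc (0:ℝ) b, w t < B := by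
  by_contra hcon
  push_neg at hcon
  obtain ⟨t₁, ht₁, hw₁⟩ := hcon
  have hwc : ContinuousOn w (Icc 0 b) := fun s hs => (hd s hs).continuousAt.continuousWithinAt
  set S : Set ℝ := Icc 0 b ∩ w ⁻¹' Ici B with hS
  have hScl : IsClosed S := hwc.preimage_isClosed_of_isClosed isClosed_Icc isClosed_Ici
  have hSne : S.Nonempty := ⟨t₁, ht₁, hw₁⟩
  have hSbdd : BddBelow S := ⟨0, fun s hs => hs.1.1⟩
  set s₀ := sInf S with hs₀
  have hs₀S : s₀ ∈ S := hScl.csInf_mem hSne hSbdd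
  have hs₀I : s₀ ∈ Icc (0:ℝ) b := hs₀S.1
  have hs₀w : B ≤ w s₀ := hs₀S.2
  have hs₀pos : 0 < s₀ := by
    rcases hs₀I.1.lt_or_eq with h | h
    · exact h
    · exact absurd (h ▸ hs₀w) (not_le.mpr h0)
  have hlt : ∀ s, 0 ≤ s → s < s₀ → w s < B := by
    intro s hs0 hss
    by_contra hws
    exact absurd (csInf_le hSbdd ⟨⟨hs0, hss.le.trans hs₀I.2⟩, not_lt.mp hws⟩) (not_le.mpr hss)
  have hder := hd s₀ hs₀I
  have hneg₀ : w' s₀ < 0 := hneg s₀ hs₀I hs₀w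
  have hslope := (hasDerivAt_iff_tendsto_slope.mp hder)
  have hev : ∀ᶠ s in nhdsWithin s₀ (Iio s₀), slope w s₀ s < 0 := by
    have : Iio s₀ ⊆ {s₀}ᶜ := fun s hs => (ne_of_lt hs)
    have h2 : nhdsWithin s₀ (Iio s₀) ≤ nhdsWithin s₀ {s₀}ᶜ := nhdsWithin_mono _ this
    exact (h2 (hslope (Iio_mem_nhds hneg₀)))
  have hev2 : ∀ᶠ s in nhdsWithin s₀ (Iio s₀), 0 < s :=
    eventually_nhdsWithin_of_eventually_nhds (eventually_gt_nhds hs₀pos)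
  obtain ⟨s, ⟨hsl, hs0⟩, hsio⟩ := ((hev.and hev2).and self_mem_nhdsWithin).exists
  have hsval : w s < B := hlt s hs0.le hsio
  have : (0:ℝ) < w s - w s₀ := by
    have hden : s - s₀ < 0 := sub_neg.mpr hsio
    rw [slope_def_field] at hsl
    rcases div_neg_iff.mp hsl with ⟨h1, h2⟩ | ⟨h1, h2⟩
    · exact h1
    · linarith
  linarith


lemma margin_bound {L U z δ B : ℝ} (hδ : 0 < δ) (hδle : δ ≤ U - L)
    (h1 : L < z) (h2 : z < U) (hB : |terr L U z| ≤ B) :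
    L + δ * Real.exp (-B) / (Real.exp B + 1) ≤ z ∧
      z ≤ U - δ * Real.exp (-B) / (Real.exp B + 1) := by
  obtain ⟨hm1, hm2⟩ := nerr_mem h1 h2
  set e := nerr L U z with he
  have hD : (0:ℝ) < U - L := by linarith
  have hep : (0:ℝ) < 1 + e := by linarith
  have hem : (0:ℝ) < 1 - e := by linarith
  have hq : (0:ℝ) < (1 + e) / (1 - e) := div_pos hep hem
  have hB0 : 0 ≤ B := le_trans (abs_nonneg _) hB
  have hub : terr L U z ≤ B := le_trans (le_abs_self _) hB
  have hlb : -B ≤ terr L U z := neg_le_of_abs_le hB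
  have hr1 : (1 + e) / (1 - e) ≤ Real.exp B := by
    rw [terr, ← he] at hub
    calc (1 + e)/(1 - e) = Real.exp (Real.log ((1+e)/(1-e))) := (Real.exp_log hq).symm
    _ ≤ Real.exp B := Real.exp_le_exp.mpr hub
  have hr2 : Real.exp (-B) ≤ (1 + e) / (1 - e) := by
    rw [terr, ← he] at hlb
    calc Real.exp (-B) ≤ Real.exp (Real.log ((1+e)/(1-e))) := Real.exp_le_exp.mpr hlb
    _ = (1 + e)/(1 - e) := Real.exp_log hq
  have hEB : (0:ℝ) < Real.exp B + 1 := by positivity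
  have hEm : (0:ℝ) < Real.exp (-B) := Real.exp_pos _
  have hEm1 : Real.exp (-B) ≤ 1 := Real.exp_le_one_iff.mpr (by linarith)
  -- 1 - e ≥ 2/(exp B + 1)
  have key1 : 2 ≤ (Real.exp B + 1) * (1 - e) := by
    have := (div_le_iff₀ hem).mp hr1
    nlinarith
  -- 1 + e ≥ exp(-B) (1 - e)
  have key2 : Real.exp (-B) * (1 - e) ≤ 1 + e := by
    have := (le_div_iff₀ hem).mp hr2
    linarith
  -- U - z = (U-L)(1-e)/2, z - L = (U-L)(1+e)/2
  have hUz : U - z = (U - L) * (1 - e) / 2 := by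
    rw [he, nerr]; field_simp; ring
  have hzL : z - L = (U - L) * (1 + e) / 2 := by
    rw [he, nerr]; field_simp; ring
  constructor
  · have h3 : δ * Real.exp (-B) / (Real.exp B + 1) ≤ z - L := by
      rw [hzL, div_le_div_iff₀ hEB (by norm_num : (0:ℝ) < 2)]
      have h4 : 2 * Real.exp (-B) ≤ (Real.exp B + 1) * (1 + e) := by nlinarith
      nlinarith
    linarith
  · have h3 : δ * Real.exp (-B) / (Real.exp B + 1) ≤ U - z := by
      rw [hUz, div_le_div_iff₀ hEB (by norm_num : (0:ℝ) < 2)]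
      nlinarith
    linarith

open Filter Topology

section
variable {n m : ℕ}
  (f : (Fin n → ℝ) → (Fin n → ℝ))
  (g : (Fin n → ℝ) → Matrix (Fin n) (Fin m) ℝ)

set_option maxHeartbeats 1000000 in
theorem funnel_invariance'
    (hf : LocallyLipschitz f)
    (hpd : ∀ y, (g y * (g y)ᵀ).PosDef)
    (γL γU γL' γU' : ℝ → Fin n → ℝ)
    (hγL : ∀ t ∈ Ici (0 : ℝ), HasDerivAt γL (γL' t) t)
    (hγU : ∀ t ∈ Ici (0 : ℝ), HasDerivAt γU (γU' t) t)
    (hbdd : ∃ C : ℝ, ∀ t ∈ Ici (0 : ℝ),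
      ‖γL t‖ ≤ C ∧ ‖γU t‖ ≤ C ∧ ‖γL' t‖ ≤ C ∧ ‖γU' t‖ ≤ C)
    (hgap : ∃ δ > (0 : ℝ), ∀ t ∈ Ici (0 : ℝ), ∀ i, δ ≤ γU t i - γL t i)
    (k : ℝ) (hk : 0 < k)
    (T : ℝ) (hT : 0 < T)
    (x : ℝ → Fin n → ℝ)
    (hxc : ContinuousOn x (Icc 0 T))
    (hx0 : ∀ i, γL 0 i < x 0 i ∧ x 0 i < γU 0 i)
    (hode : ∀ t ∈ Icc (0 : ℝ) T,
      (∀ s ∈ Icc (0 : ℝ) t, ∀ i, γL s i < x s i ∧ x s i < γU s i) →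
      HasDerivAt x
        (f (x t) + (g (x t)).mulVec (funnelController k g γL γU γL' γU' (x t) t)) t) :
    ∀ t ∈ Icc (0 : ℝ) T, ∀ i, γL t i < x t i ∧ x t i < γU t i := by
  classical
  rcases Nat.eq_zero_or_pos n with hn | hn
  · intro t ht i; exact absurd i.isLt (by omega)
  -- constants
  obtain ⟨C₀, hC₀⟩ := hbdd
  set C : ℝ := max C₀ 1 with hCdef
  have hC1 : (1:ℝ) ≤ C := le_max_right _ _
  have hC0 : (0:ℝ) < C := lt_of_lt_of_le one_pos hC1
  have hC : ∀ t ∈ Ici (0:ℝ), ‖γL t‖ ≤ C ∧ ‖γU t‖ ≤ C ∧ ‖γL' t‖ ≤ C ∧ ‖γU' t‖ ≤ C := by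
    intro t ht
    obtain ⟨a, b, c, d⟩ := hC₀ t ht
    exact ⟨a.trans (le_max_left _ _), b.trans (le_max_left _ _),
      c.trans (le_max_left _ _), d.trans (le_max_left _ _)⟩
  obtain ⟨δ, hδ, hgap⟩ := hgap
  obtain ⟨M, hM⟩ := (isCompact_closedBall (0 : Fin n → ℝ) C).exists_bound_of_continuousOn
    hf.continuous.continuousOn
  have hM0 : 0 ≤ M :=
    le_trans (norm_nonneg _) (hM 0 (Metric.mem_closedBall_self hC0.le))
  obtain ⟨B₀, hB₀⟩ := Finite.exists_le (fun i => |terr (γL 0 i) (γU 0 i) (x 0 i)|)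
  have hB₀0 : 0 ≤ B₀ := le_trans (abs_nonneg _) (hB₀ ⟨0, hn⟩)
  set B : ℝ := max B₀ (C * (M + C) / (2 * k)) + 1 with hBdef
  have hB1 : 1 ≤ B := by
    rw [hBdef]
    have : (0:ℝ) ≤ max B₀ (C * (M + C) / (2 * k)) := le_trans hB₀0 (le_max_left _ _)
    linarith
  have hBgt : M + C < k * (2 / C) * B := by
    have h1 : C * (M + C) / (2 * k) < B := by
      rw [hBdef]
      have := le_max_right B₀ (C * (M + C) / (2 * k)); linarith
    have h2 : C * (M + C) / (2 * k) * (2 * k / C) = M + C := by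
      field_simp
    calc M + C = C * (M + C) / (2 * k) * (2 * k / C) := h2.symm
      _ < B * (2 * k / C) := by
          exact mul_lt_mul_of_pos_right h1 (by positivity)
      _ = k * (2 / C) * B := by ring
  set μ : ℝ := δ * Real.exp (-B) / (Real.exp B + 1) with hμdef
  have hμpos : 0 < μ := by positivity
  -- the inside predicate
  set Ins : ℝ → Prop := fun t => ∀ i, γL t i < x t i ∧ x t i < γU t i with hIns
  -- derivative of the transformed error
  have key : ∀ t ∈ Icc (0:ℝ) T, (∀ s ∈ Icc (0:ℝ) t, Ins s) → ∀ i,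
      HasDerivAt (fun s => terr (γL s i) (γU s i) (x s i))
        (xhat (γL t i) (γU t i) (x t i) *
          (f (x t) i - (γU' t i + γL' t i) / 2 -
            k * xhat (γL t i) (γU t i) (x t i) * terr (γL t i) (γU t i) (x t i))) t := by
    intro t ht hins i
    have htI : t ∈ Ici (0:ℝ) := ht.1
    set w : Fin n → ℝ := fun j =>
      k * xhat (γL t j) (γU t j) (x t j) * terr (γL t j) (γU t j) (x t j)
        - (1 / 2) * (γU' t j - γL' t j) * nerr (γL t j) (γU t j) (x t j) with hw
    have hcc : (g (x t)).mulVec (funnelController k g γL γU γL' γU' (x t) t) = -w := by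
      simp only [funnelController]
      exact ctrl_cancel (g (x t)) (hpd (x t)) w
    have hxv : HasDerivAt x (f (x t) + -w) t := by
      have := hode t ht hins
      rwa [hcc] at this
    have hxi : HasDerivAt (fun s => x s i) (f (x t) i - w i) t := by
      have := hasDerivAt_pi.mp hxv i
      simpa [sub_eq_add_neg] using this
    have hinsi := hins t ⟨ht.1, le_refl t⟩ i
    have hd := terr_hasDerivAt (hasDerivAt_pi.mp (hγL t htI) i)
      (hasDerivAt_pi.mp (hγU t htI) i) hxi hinsi.1 hinsi.2
    convert hd using 1
    rw [hw]
    ring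
  -- uniform bound on the transformed error
  have bnd : ∀ b ∈ Icc (0:ℝ) T, (∀ s ∈ Icc (0:ℝ) b, Ins s) → ∀ i, ∀ t ∈ Icc (0:ℝ) b,
      |terr (γL t i) (γU t i) (x t i)| < B := by
    intro b hb hins i
    -- facts at points of [0, b]
    have facts : ∀ t ∈ Icc (0:ℝ) b,
        (0 < xhat (γL t i) (γU t i) (x t i)) ∧
        (2 / C ≤ xhat (γL t i) (γU t i) (x t i)) ∧
        |f (x t) i| ≤ M ∧ |(γU' t i + γL' t i) / 2| ≤ C := by
      intro t ht
      have htI : t ∈ Ici (0:ℝ) := ht.1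
      obtain ⟨hCL, hCU, hCL', hCU'⟩ := hC t htI
      have hinsi := hins t ht i
      obtain ⟨hm1, hm2⟩ := nerr_mem hinsi.1 hinsi.2
      have hDpos : 0 < γU t i - γL t i := by linarith [hinsi.1, hinsi.2]
      have he2 : 0 < 1 - nerr (γL t i) (γU t i) (x t i) ^ 2 := by nlinarith
      have he2' : 1 - nerr (γL t i) (γU t i) (x t i) ^ 2 ≤ 1 := by nlinarith
      have hUb : |γU t i| ≤ C := le_trans (norm_le_pi_norm (γU t) i) hCU
      have hLb : |γL t i| ≤ C := le_trans (norm_le_pi_norm (γL t) i) hCL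
      have hD2C : γU t i - γL t i ≤ 2 * C := by
        have := abs_le.mp hUb; have := abs_le.mp hLb; linarith [this.1]
      have hxiC : ∀ j, |x t j| ≤ C := by
        intro j
        have hj := hins t ht j
        have hUb' := abs_le.mp (le_trans (norm_le_pi_norm (γU t) j) hCU)
        have hLb' := abs_le.mp (le_trans (norm_le_pi_norm (γL t) j) hCL)
        exact abs_le.mpr ⟨by linarith [hj.1, hLb'.1], by linarith [hj.2, hUb'.2]⟩
      have hxball : x t ∈ Metric.closedBall (0 : Fin n → ℝ) C := by
        rw [Metric.mem_closedBall, dist_zero_right]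
        exact (pi_norm_le_iff_of_nonneg hC0.le).mpr
          (fun j => by rw [Real.norm_eq_abs]; exact hxiC j)
      have hfM : |f (x t) i| ≤ M :=
        le_trans (norm_le_pi_norm (f (x t)) i) (hM _ hxball)
      refine ⟨?_, ?_, hfM, ?_⟩
      · rw [xhat]; positivity
      · rw [xhat, div_le_div_iff₀ hC0 (by positivity)]
        nlinarith
      · have := abs_le.mp (le_trans (norm_le_pi_norm (γU' t) i) hCU')
        have := abs_le.mp (le_trans (norm_le_pi_norm (γL' t) i) hCL')
        rw [abs_le]
        constructor <;> [skip; skip] <;>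
          · have h1 := abs_le.mp (le_trans (norm_le_pi_norm (γU' t) i) hCU')
            have h2 := abs_le.mp (le_trans (norm_le_pi_norm (γL' t) i) hCL')
            linarith [h1.1, h1.2, h2.1, h2.2]
    have hds : ∀ t ∈ Icc (0:ℝ) b,
        HasDerivAt (fun s => terr (γL s i) (γU s i) (x s i))
          (xhat (γL t i) (γU t i) (x t i) *
            (f (x t) i - (γU' t i + γL' t i) / 2 -
              k * xhat (γL t i) (γU t i) (x t i) * terr (γL t i) (γU t i) (x t i))) t := by
      intro t ht
      exact key t ⟨ht.1, ht.2.trans hb.2⟩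
        (fun s hs => hins s ⟨hs.1, hs.2.trans ht.2⟩) i
    have h0B : |terr (γL 0 i) (γU 0 i) (x 0 i)| < B := by
      have := hB₀ i
      have : B₀ < B := by
        rw [hBdef]
        have := le_max_left B₀ (C * (M + C) / (2 * k)); linarith
      linarith [hB₀ i]
    intro t ht
    have hup : terr (γL t i) (γU t i) (x t i) < B := by
      refine stay_lt hds ?_ ?_ t ht
      · exact lt_of_le_of_lt (le_abs_self _) h0B
      · intro s hs hBs
        obtain ⟨hξpos, hξge, hfM, hsC⟩ := facts s hs
        apply mul_neg_of_pos_of_neg hξpos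
        have hE : B ≤ terr (γL s i) (γU s i) (x s i) := hBs
        have hkξE : k * (2 / C) * B ≤
            k * xhat (γL s i) (γU s i) (x s i) * terr (γL s i) (γU s i) (x s i) := by
          have hB0 : (0:ℝ) < B := by linarith
          have h1 := mul_le_mul hξge hE hB0.le hξpos.le
          have h2 := mul_le_mul_of_nonneg_left h1 hk.le
          linarith
        linarith [abs_le.mp hfM, abs_le.mp hsC]
    have hlo : -terr (γL t i) (γU t i) (x t i) < B := by
      refine stay_lt (w' := fun s => -(xhat (γL s i) (γU s i) (x s i) *
            (f (x s) i - (γU' s i + γL' s i) / 2 -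
              k * xhat (γL s i) (γU s i) (x s i) * terr (γL s i) (γU s i) (x s i))))
        (fun s hs => (hds s hs).neg) ?_ ?_ t ht
      · exact lt_of_le_of_lt (neg_le_abs _) h0B
      · intro s hs hBs
        obtain ⟨hξpos, hξge, hfM, hsC⟩ := facts s hs
        rw [neg_lt, neg_zero]
        apply mul_pos hξpos
        have hE : terr (γL s i) (γU s i) (x s i) ≤ -B := by
          simp only [Pi.neg_apply] at hBs; linarith
        have hkξE : k * xhat (γL s i) (γU s i) (x s i) * terr (γL s i) (γU s i) (x s i)
            ≤ -(k * (2 / C) * B) := by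
          have hB0 : (0:ℝ) < B := by linarith
          have h1 := mul_le_mul hξge (by linarith : B ≤ -terr (γL s i) (γU s i) (x s i))
            hB0.le hξpos.le
          have h2 := mul_le_mul_of_nonneg_left h1 hk.le
          nlinarith
        linarith [abs_le.mp hfM, abs_le.mp hsC]
    exact abs_lt.mpr ⟨by linarith, hup⟩
  -- margin claim
  have marg : ∀ b ∈ Icc (0:ℝ) T, (∀ s ∈ Icc (0:ℝ) b, Ins s) → ∀ t ∈ Icc (0:ℝ) b, ∀ i,
      γL t i + μ ≤ x t i ∧ x t i ≤ γU t i - μ := by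
    intro b hb hins t ht i
    have hinsi := hins t ht i
    have := margin_bound hδ (hgap t ht.1 i) hinsi.1 hinsi.2 (bnd b hb hins i t ht).le
    exact ⟨by linarith [this.1], by linarith [this.2]⟩
  -- the sSup argument
  set S : Set ℝ := {t | t ∈ Icc (0:ℝ) T ∧ ∀ s ∈ Icc (0:ℝ) t, Ins s} with hSdef
  have h0S : (0:ℝ) ∈ S := by
    refine ⟨⟨le_refl 0, hT.le⟩, fun s hs => ?_⟩
    have : s = 0 := le_antisymm hs.2 hs.1
    rw [this]; exact hx0
  have hSne : S.Nonempty := ⟨0, h0S⟩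
  have hSb : BddAbove S := ⟨T, fun s hs => hs.1.2⟩
  set τ := sSup S with hτdef
  have hτ0 : 0 ≤ τ := le_csSup hSb h0S
  have hτT : τ ≤ T := csSup_le hSne (fun s hs => hs.1.2)
  have stepA : ∀ s, 0 ≤ s → s < τ → Ins s := by
    intro s h0 hlt
    obtain ⟨a, haS, hsa⟩ := exists_lt_of_lt_csSup hSne hlt
    exact haS.2 s ⟨h0, hsa.le⟩
  have stepB : Ins τ := by
    rcases hτ0.lt_or_eq with h0τ | h0τ
    · intro i
      have hPb : ∀ t, 0 ≤ t → t < τ → γL t i + μ ≤ x t i ∧ x t i ≤ γU t i - μ := by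
        intro t h0t htτ
        exact marg t ⟨h0t, htτ.le.trans hτT⟩
          (fun s hs => stepA s hs.1 (lt_of_le_of_lt hs.2 htτ)) t ⟨h0t, le_refl t⟩ i
      have hτmem : τ ∈ Icc (0:ℝ) T := ⟨hτ0, hτT⟩
      have hne : (𝓝[Ico (0:ℝ) τ] τ).NeBot := by
        rw [← mem_closure_iff_nhdsWithin_neBot, closure_Ico h0τ.ne]
        exact ⟨hτ0, le_refl τ⟩
      have hsub : Ico (0:ℝ) τ ⊆ Icc 0 T := fun s hs => ⟨hs.1, hs.2.le.trans hτT⟩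
      have hxt : Tendsto (fun t => x t i) (𝓝[Ico (0:ℝ) τ] τ) (𝓝 (x τ i)) := by
        have := (hxc τ hτmem).mono hsub
        exact ((continuous_apply i).tendsto _).comp this
      have hLt : Tendsto (fun t => γL t i + μ) (𝓝[Ico (0:ℝ) τ] τ) (𝓝 (γL τ i + μ)) := by
        have h1 : ContinuousAt (fun t => γL t i) τ :=
          (continuous_apply i).continuousAt.comp (hγL τ hτ0).continuousAt
        exact ((h1.add continuousAt_const).continuousWithinAt)
      have hUt : Tendsto (fun t => γU t i - μ) (𝓝[Ico (0:ℝ) τ] τ) (𝓝 (γU τ i - μ)) := by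
        have h1 : ContinuousAt (fun t => γU t i) τ :=
          (continuous_apply i).continuousAt.comp (hγU τ hτ0).continuousAt
        exact ((h1.sub continuousAt_const).continuousWithinAt)
      have hle1 : γL τ i + μ ≤ x τ i := by
        refine le_of_tendsto_of_tendsto hLt hxt ?_
        filter_upwards [self_mem_nhdsWithin] with s hs
        exact (hPb s hs.1 hs.2).1
      have hle2 : x τ i ≤ γU τ i - μ := by
        refine le_of_tendsto_of_tendsto hxt hUt ?_
        filter_upwards [self_mem_nhdsWithin] with s hs
        exact (hPb s hs.1 hs.2).2
      exact ⟨by linarith, by linarith⟩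
    · rw [← h0τ]; exact hx0
  have hτS : τ ∈ S := by
    refine ⟨⟨hτ0, hτT⟩, fun s hs => ?_⟩
    rcases hs.2.lt_or_eq with h | h
    · exact stepA s hs.1 h
    · rw [h]; exact stepB
  have hτeq : τ = T := by
    by_contra hne
    have hτT' : τ < T := lt_of_le_of_ne hτT hne
    have hev : ∀ᶠ s in nhdsWithin τ (Icc (0:ℝ) T), Ins s := by
      rw [eventually_all]
      intro i
      have hxw : ContinuousWithinAt (fun s => x s i) (Icc (0:ℝ) T) τ :=
        ((continuous_apply i).tendsto _).comp (hxc τ ⟨hτ0, hτT⟩)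
      have hLw : ContinuousWithinAt (fun s => γL s i) (Icc (0:ℝ) T) τ :=
        ((continuous_apply i).continuousAt.comp (hγL τ hτ0).continuousAt).continuousWithinAt
      have hUw : ContinuousWithinAt (fun s => γU s i) (Icc (0:ℝ) T) τ :=
        ((continuous_apply i).continuousAt.comp (hγU τ hτ0).continuousAt).continuousWithinAt
      have hIτ := stepB i
      have h1 : ∀ᶠ s in nhdsWithin τ (Icc (0:ℝ) T), γL s i < x s i := by
        have h2 : Tendsto (fun s => x s i - γL s i) (nhdsWithin τ (Icc (0:ℝ) T))
            (𝓝 (x τ i - γL τ i)) := hxw.sub hLw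
        have := h2.eventually (eventually_gt_nhds (by linarith [hIτ.1] : (0:ℝ) < x τ i - γL τ i))
        filter_upwards [this] with s hs; linarith
      have h2 : ∀ᶠ s in nhdsWithin τ (Icc (0:ℝ) T), x s i < γU s i := by
        have h2 : Tendsto (fun s => γU s i - x s i) (nhdsWithin τ (Icc (0:ℝ) T))
            (𝓝 (γU τ i - x τ i)) := hUw.sub hxw
        have := h2.eventually (eventually_gt_nhds (by linarith [hIτ.2] : (0:ℝ) < γU τ i - x τ i))
        filter_upwards [this] with s hs; linarith
      filter_upwards [h1, h2] with s hs1 hs2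
      exact ⟨hs1, hs2⟩
    obtain ⟨ε, hε, hball⟩ := Metric.mem_nhdsWithin_iff.mp hev
    set t' : ℝ := min (τ + ε / 2) T with ht'def
    have ht'τ : τ < t' := lt_min (by linarith) hτT'
    have ht'T : t' ≤ T := min_le_right _ _
    have ht'S : t' ∈ S := by
      refine ⟨⟨hτ0.trans ht'τ.le, ht'T⟩, fun s hs => ?_⟩
      rcases le_or_gt s τ with h | h
      · exact hτS.2 s ⟨hs.1, h⟩
      · apply hball
        refine ⟨?_, ⟨hs.1, hs.2.trans ht'T⟩⟩
        rw [Metric.mem_ball, Real.dist_eq, abs_of_pos (by linarith)]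
        have : s ≤ τ + ε / 2 := hs.2.trans (min_le_left _ _)
        linarith
    exact absurd (le_csSup hSb ht'S) (not_le.mpr ht'τ)
  intro t ht
  exact hτS.2 t (hτeq ▸ ht)

end

/-- Funnel invariance: every admissible closed-loop solution of
`ẋ = f(x) + g(x)û(x,t)` starting strictly inside the funnel remains strictly inside the
funnel on `[0, T]`. -/
theorem funnel_invariance {n m : ℕ}
    (f : (Fin n → ℝ) → (Fin n → ℝ))
    (g : (Fin n → ℝ) → Matrix (Fin n) (Fin m) ℝ)
    (hf : LocallyLipschitz f)
    (hg : LocallyLipschitz (fun y => fun i j => g y i j))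
    (hpd : ∀ y, (g y * (g y)ᵀ).PosDef)
    (γL γU γL' γU' : ℝ → Fin n → ℝ)
    (hγL : ∀ t ∈ Ici (0 : ℝ), HasDerivAt γL (γL' t) t)
    (hγU : ∀ t ∈ Ici (0 : ℝ), HasDerivAt γU (γU' t) t)
    (hγL'c : ContinuousOn γL' (Ici 0)) (hγU'c : ContinuousOn γU' (Ici 0))
    (hbdd : ∃ C : ℝ, ∀ t ∈ Ici (0 : ℝ),
      ‖γL t‖ ≤ C ∧ ‖γU t‖ ≤ C ∧ ‖γL' t‖ ≤ C ∧ ‖γU' t‖ ≤ C)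
    (hgap : ∃ δ > (0 : ℝ), ∀ t ∈ Ici (0 : ℝ), ∀ i, δ ≤ γU t i - γL t i)
    (k : ℝ) (hk : 0 < k)
    (T : ℝ) (hT : 0 < T)
    (x : ℝ → Fin n → ℝ)
    (hxc : ContinuousOn x (Icc 0 T))
    (hx0 : ∀ i, γL 0 i < x 0 i ∧ x 0 i < γU 0 i)
    (hode : ∀ t ∈ Icc (0 : ℝ) T,
      (∀ s ∈ Icc (0 : ℝ) t, ∀ i, γL s i < x s i ∧ x s i < γU s i) →
      HasDerivAt x
        (f (x t) + (g (x t)).mulVec (funnelController k g γL γU γL' γU' (x t) t)) t) :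
    ∀ t ∈ Icc (0 : ℝ) T, ∀ i, γL t i < x t i ∧ x t i < γU t i :=
  funnel_invariance' f g hf hpd γL γU γL' γU' hγL hγU hbdd hgap k hk T hT x hxc hx0 hode
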